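/- If f : I → ℝ is twice continuously differentiable on an open interval I and f''(x) - p²f(x) ≥ 0 for all x ∈ I, then f is hyperbolic p-convex on I, i.e. for every a < b in I and every x ∈ [a,b], f(x) ≤ (sinh[p(b-x)]/sinh[p(b-a)]) f(a) + (sinh[p(x-a)]/sinh[p(b-a)]) f(b). -/

import Mathlib

open Real MeasureTheory

def HypPConvexOn (p : ℝ) (I : Set ℝ) (f : ℝ → ℝ) : Prop :=
  ∀ a ∈ I, ∀ b ∈ I, a < b → ∀ x ∈ Set.Icc a b,
    f x ≤ (Real.sinh (p * (b - x)) / Real.sinh (p * (b - a))) * f a +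
          (Real.sinh (p * (x - a)) / Real.sinh (p * (b - a))) * f b

def HypPConcaveOn (p : ℝ) (I : Set ℝ) (f : ℝ → ℝ) : Prop :=
  ∀ a ∈ I, ∀ b ∈ I, a < b → ∀ x ∈ Set.Icc a b,
    f x ≥ (Real.sinh (p * (b - x)) / Real.sinh (p * (b - a))) * f a +
          (Real.sinh (p * (x - a)) / Real.sinh (p * (b - a))) * f b

private lemma hypAuxConvex (p A B : ℝ) (hp : 0 < p) (f f' f'' : ℝ → ℝ)
    (hf' : ∀ x ∈ Set.Ioo A B, HasDerivAt f (f' x) x)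
    (hf'' : ∀ x ∈ Set.Ioo A B, HasDerivAt f' (f'' x) x)
    (hineq : ∀ x ∈ Set.Ioo A B, f'' x - p ^ 2 * f x ≥ 0) :
    ConvexOn ℝ (Set.Ioo (Real.exp (2*p*A)) (Real.exp (2*p*B)))
      (fun t => f (Real.log t / (2*p)) * Real.sqrt t) := by
  set D := Set.Ioo (Real.exp (2*p*A)) (Real.exp (2*p*B)) with hD
  have hpos : ∀ t ∈ D, 0 < t := fun t ht => lt_trans (Real.exp_pos _) ht.1
  have hmem : ∀ t ∈ D, Real.log t / (2*p) ∈ Set.Ioo A B := by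
    intro t ht
    have h0 := hpos t ht
    constructor
    · rw [lt_div_iff₀ (by positivity)]
      have := Real.log_lt_log (Real.exp_pos _) ht.1
      rw [Real.log_exp] at this; linarith [this]
    · rw [div_lt_iff₀ (by positivity)]
      have := Real.log_lt_log h0 ht.2
      rw [Real.log_exp] at this; linarith [this]
  set g1 : ℝ → ℝ := fun t => (f' (Real.log t / (2*p)) / (2*p) + f (Real.log t / (2*p)) / 2) / Real.sqrt t with hg1
  have hg1d : ∀ t ∈ D, HasDerivAt (fun t => f (Real.log t / (2*p)) * Real.sqrt t) (g1 t) t := by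
    intro t ht
    have h0 := hpos t ht
    have hs : Real.sqrt t ≠ 0 := by positivity
    have d1 : HasDerivAt (fun t => f (Real.log t / (2*p))) (f' (Real.log t / (2*p)) * (1/t / (2*p))) t := by
      have := ((hf' _ (hmem t ht)).comp t ((Real.hasDerivAt_log (ne_of_gt h0)).div_const (2*p)))
      simpa [div_div, Function.comp_def] using this
    have d2 : HasDerivAt Real.sqrt (1/(2*Real.sqrt t)) t := Real.hasDerivAt_sqrt (ne_of_gt h0)
    have := d1.mul d2
    convert this using 1
    · rfl
    · rfl
    · rfl
    rw [hg1]
    have hss : Real.sqrt t * Real.sqrt t = t := Real.mul_self_sqrt h0.le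
    field_simp
    ring_nf
    rw [show t = Real.sqrt t * Real.sqrt t from hss.symm]
    ring_nf
    rw [Real.sqrt_sq (Real.sqrt_nonneg t)]
    ring
  set g2 : ℝ → ℝ := fun t => (f'' (Real.log t / (2*p)) - p^2 * f (Real.log t / (2*p))) / (4*p^2) / (t * Real.sqrt t) with hg2def
  have hg2d : ∀ t ∈ D, HasDerivAt g1 (g2 t) t := by
    intro t ht
    have h0 := hpos t ht
    have hs : Real.sqrt t ≠ 0 := by positivity
    have hss : Real.sqrt t * Real.sqrt t = t := Real.mul_self_sqrt h0.le
    have dlog : HasDerivAt (fun t => Real.log t / (2*p)) (1/t / (2*p)) t :=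
      by simpa [one_div] using (Real.hasDerivAt_log (ne_of_gt h0)).div_const (2*p)
    have dN : HasDerivAt (fun t => f' (Real.log t / (2*p)) / (2*p) + f (Real.log t / (2*p)) / 2)
        (f'' (Real.log t / (2*p)) * (1/t / (2*p)) / (2*p) + f' (Real.log t / (2*p)) * (1/t/(2*p)) / 2) t := by
      exact (((hf'' _ (hmem t ht)).comp t dlog).div_const (2*p)).add
        (((hf' _ (hmem t ht)).comp t dlog).div_const 2)
    have dI : HasDerivAt (fun t => (Real.sqrt t)⁻¹) (-(1/(2*Real.sqrt t)) / (Real.sqrt t)^2) t :=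
      (Real.hasDerivAt_sqrt (ne_of_gt h0)).inv hs
    have hmul := dN.mul dI
    have heq : g1 = fun t => (f' (Real.log t / (2*p)) / (2*p) + f (Real.log t / (2*p)) / 2) * (Real.sqrt t)⁻¹ := by
      funext t; rw [hg1]; ring
    rw [heq]
    convert hmul using 1
    · rfl
    · rfl
    · rfl
    rw [hg2def]
    field_simp
    ring_nf
    rw [Real.sq_sqrt h0.le]
    ring
  have hint : interior D = D := by rw [hD, interior_Ioo]
  refine convexOn_of_hasDerivWithinAt2_nonneg (convex_Ioo _ _)
    (fun t ht => ((hg1d t ht).continuousAt).continuousWithinAt)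
    (fun t ht => ((hg1d t (hint ▸ ht)).hasDerivWithinAt))
    (fun t ht => ((hg2d t (hint ▸ ht)).hasDerivWithinAt))
    (fun t ht => ?_)
  have ht' : t ∈ D := hint ▸ ht
  have h0 := hpos t ht'
  have := hineq _ (hmem t ht')
  rw [hg2def]
  have : 0 ≤ (f'' (Real.log t / (2*p)) - p^2 * f (Real.log t / (2*p))) := this
  positivity

private lemma hyp_of_pos (A B p : ℝ) (hp : 0 < p) (f f' f'' : ℝ → ℝ)
    (hf' : ∀ x ∈ Set.Ioo A B, HasDerivAt f (f' x) x)
    (hf'' : ∀ x ∈ Set.Ioo A B, HasDerivAt f' (f'' x) x)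
    (hineq : ∀ x ∈ Set.Ioo A B, f'' x - p ^ 2 * f x ≥ 0) :
    HypPConvexOn p (Set.Ioo A B) f := by
  have hconv := hypAuxConvex p A B hp f f' f'' hf' hf'' hineq
  intro a ha b hb hab x hx
  set u := Real.exp (p*a) with hu
  set v := Real.exp (p*x) with hv
  set w := Real.exp (p*b) with hw
  have hu0 : 0 < u := Real.exp_pos _
  have hv0 : 0 < v := Real.exp_pos _
  have hw0 : 0 < w := Real.exp_pos _
  have huv : u ≤ v := Real.exp_le_exp.2 (by nlinarith [hx.1])
  have hvw : v ≤ w := Real.exp_le_exp.2 (by nlinarith [hx.2])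
  have huw : u < w := Real.exp_lt_exp.2 (by nlinarith)
  have hwu2 : u^2 < w^2 := by nlinarith
  have e2 : ∀ y : ℝ, Real.exp (2*p*y) = Real.exp (p*y)^2 := by
    intro y; rw [sq, ← Real.exp_add]; ring_nf
  have gval : ∀ y : ℝ, f (Real.log (Real.exp (p*y)^2) / (2*p)) * Real.sqrt (Real.exp (p*y)^2)
      = f y * Real.exp (p*y) := by
    intro y
    rw [Real.sqrt_sq (Real.exp_pos _).le, Real.log_pow, Real.log_exp]
    congr 2
    field_simp
    ring
  have hta : u^2 ∈ Set.Ioo (Real.exp (2*p*A)) (Real.exp (2*p*B)) := by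
    rw [hu, ← e2]
    exact ⟨Real.exp_lt_exp.2 (by nlinarith [ha.1]), Real.exp_lt_exp.2 (by nlinarith [ha.2])⟩
  have htb : w^2 ∈ Set.Ioo (Real.exp (2*p*A)) (Real.exp (2*p*B)) := by
    rw [hw, ← e2]
    exact ⟨Real.exp_lt_exp.2 (by nlinarith [hb.1]), Real.exp_lt_exp.2 (by nlinarith [hb.2])⟩
  have hl0 : 0 ≤ (w^2 - v^2)/(w^2 - u^2) := by
    apply div_nonneg <;> nlinarith
  have hm0 : 0 ≤ (v^2 - u^2)/(w^2 - u^2) := by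
    apply div_nonneg <;> nlinarith
  have hne : w^2 - u^2 ≠ 0 := ne_of_gt (by nlinarith)
  have hsum : (w^2 - v^2)/(w^2 - u^2) + (v^2 - u^2)/(w^2 - u^2) = 1 := by
    rw [← add_div, show w^2 - v^2 + (v^2 - u^2) = w^2 - u^2 by ring]
    exact div_self hne
  have hcomb : (w^2 - v^2)/(w^2 - u^2) * (u^2) + (v^2 - u^2)/(w^2 - u^2) * (w^2) = v^2 := by
    field_simp
    ring
  have key := hconv.2 hta htb hl0 hm0 hsum
  simp only [smul_eq_mul] at key
  rw [hcomb] at key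
  have ga := gval a; have gb := gval b; have gx := gval x
  rw [← hu] at ga; rw [← hw] at gb; rw [← hv] at gx
  rw [ga, gb, gx] at key
  have sinh_eq : ∀ y z : ℝ, Real.sinh (p*(z-y))
      = (Real.exp (p*z)^2 - Real.exp (p*y)^2)/(2*Real.exp (p*y)*Real.exp (p*z)) := by
    intro y z
    rw [Real.sinh_eq, show p*(z-y) = p*z - p*y by ring, Real.exp_sub, neg_sub, Real.exp_sub]
    have := Real.exp_pos (p*y); have := Real.exp_pos (p*z)
    field_simp
  rw [show p*(b-x) = p*(b-x) by rfl]
  rw [sinh_eq x b, sinh_eq a x, sinh_eq a b]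
  calc f x = f x * v / v := by field_simp
    _ ≤ ((w^2 - v^2)/(w^2 - u^2) * (f a * u) + (v^2 - u^2)/(w^2 - u^2) * (f b * w)) / v :=
        (div_le_div_iff_of_pos_right hv0).2 key
    _ = (w^2 - v^2)/(2*v*w) / ((w^2 - u^2)/(2*u*w)) * f a
        + (v^2 - u^2)/(2*u*v) / ((w^2 - u^2)/(2*u*w)) * f b := by
        have h1 : v ≠ 0 := hv0.ne'
        have h2 : u ≠ 0 := hu0.ne'
        have h3 : w ≠ 0 := hw0.ne'
        field_simp
    _ = _ := by rw [hu, hv, hw]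

theorem second_order_implies_hyp_convex
    (A B p : ℝ) (hp : p ≠ 0) (f f' f'' : ℝ → ℝ)
    (hf' : ∀ x ∈ Set.Ioo A B, HasDerivAt f (f' x) x)
    (hf'' : ∀ x ∈ Set.Ioo A B, HasDerivAt f' (f'' x) x)
    (hcont : ContinuousOn f'' (Set.Ioo A B))
    (hineq : ∀ x ∈ Set.Ioo A B, f'' x - p ^ 2 * f x ≥ 0) :
    HypPConvexOn p (Set.Ioo A B) f := by
  rcases hp.lt_or_gt with hneg | hpos
  · have h := hyp_of_pos A B (-p) (by linarith) f f' f''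
      hf' hf'' (by simpa [neg_pow, neg_sq] using hineq)
    intro a ha b hb hab x hx
    have := h a ha b hb hab x hx
    simpa [neg_mul, Real.sinh_neg, neg_div_neg_eq] using this
  · exact hyp_of_pos A B p hpos f f' f'' hf' hf'' hineq
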